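/- Let (P, Ω) be a poset with an ℝ-flow, let ε ≥ 0, and let I, J ⊆ P be 2ε-significant intervals such that all pairwise intersections among shifts of I and J occurring below are intervals (e.g. I, J belong to an intersection-closed family of intervals closed under the action of Ω). Then C(I) and C(J) are ε-interleaved if and only if the following four conditions hold: (1) there exists a nonzero morphism C(I) → C(J(ε)); (2) there exists a nonzero morphism C(J) → C(I(ε)); (3) I ∩ I(2ε) is nonempty and I ∩ I(2ε) ⊆ J(ε); (4) J ∩ J(2ε) is nonempty and J ∩ J(2ε) ⊆ I(ε). -/

import Mathlib

open CategoryTheory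
open scoped Classical ENNReal NNReal

set_option linter.unusedSectionVars false
set_option linter.unusedVariables false

/-! ## Posets, intervals, flows -/

variable {P : Type} [PartialOrder P]

/-- A subset of a poset is poset-convex if it contains every point between two of its points. -/
def PosetConvex (I : Set P) : Prop :=
  ∀ ⦃p q r : P⦄, p ∈ I → q ∈ I → p ≤ r → r ≤ q → r ∈ I

/-- A subset of a poset is poset-connected if any two of its points are joined by a
zigzag path inside the subset. -/
def PosetConnected (I : Set P) : Prop :=
  ∀ p ∈ I, ∀ q ∈ I,
    Relation.ReflTransGen (fun a b => b ∈ I ∧ (a ≤ b ∨ b ≤ a)) p q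

/-- An interval in a poset is a poset-convex and poset-connected subset. -/
def IsInterval (I : Set P) : Prop := PosetConvex I ∧ PosetConnected I

/-- `Q` is a poset-connected component of `U`: a poset-connected subset of `U`, maximal with
respect to inclusion among poset-connected subsets of `U`. -/
def IsPosetComponent (U Q : Set P) : Prop :=
  Q ⊆ U ∧ PosetConnected Q ∧
    ∀ Q' : Set P, Q' ⊆ U → PosetConnected Q' → Q ⊆ Q' → Q' = Q

/-- A subset `Q` of `I ∩ J` is `(I,J)`-valid. -/
def IsValid (I J Q : Set P) : Prop :=
  ∀ p ∈ Q, (∀ q ∈ I, q ≤ p → q ∈ J) ∧ (∀ r ∈ J, p ≤ r → r ∈ I)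

/-- An `ℝ`-flow on a poset. -/
structure RFlow (P : Type) [PartialOrder P] where
  Ω : ℝ → P → P
  mono : ∀ t : ℝ, Monotone (Ω t)
  mono_param : ∀ {t s : ℝ}, t ≤ s → ∀ p : P, Ω t p ≤ Ω s p
  add : ∀ t s : ℝ, ∀ p : P, Ω (t + s) p = Ω t (Ω s p)
  zero : ∀ p : P, Ω 0 p = p

/-- The `t`-shift `I(t)` of a subset of a poset with an `ℝ`-flow. -/
def RFlow.shiftSet (Φ : RFlow P) (I : Set P) (t : ℝ) : Set P := {p : P | Φ.Ω t p ∈ I}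

lemma RFlow.self_le (Φ : RFlow P) {t : ℝ} (ht : 0 ≤ t) (p : P) : p ≤ Φ.Ω t p := by
  have h := Φ.mono_param ht p
  rwa [Φ.zero] at h

lemma RFlow.self_le_twice (Φ : RFlow P) {t : ℝ} (ht : 0 ≤ t) (p : P) :
    p ≤ Φ.Ω t (Φ.Ω t p) :=
  (Φ.self_le ht p).trans (Φ.self_le ht _)

lemma RFlow.omega_neg_omega (Φ : RFlow P) (t : ℝ) (p : P) : Φ.Ω (-t) (Φ.Ω t p) = p := by
  have h := Φ.add (-t) t p
  rw [neg_add_cancel, Φ.zero] at h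
  exact h.symm

lemma RFlow.omega_omega_neg (Φ : RFlow P) (t : ℝ) (p : P) : Φ.Ω t (Φ.Ω (-t) p) = p := by
  have h := Φ.add t (-t) p
  rw [add_neg_cancel, Φ.zero] at h
  exact h.symm

lemma RFlow.posetConvex_shiftSet (Φ : RFlow P) {I : Set P} (hI : PosetConvex I) (t : ℝ) :
    PosetConvex (Φ.shiftSet I t) := by
  intro p q r hp hq hpr hrq
  exact hI hp hq (Φ.mono t hpr) (Φ.mono t hrq)

lemma RFlow.posetConnected_shiftSet (Φ : RFlow P) {I : Set P} (hI : PosetConnected I) (t : ℝ) :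
    PosetConnected (Φ.shiftSet I t) := by
  intro p hp q hq
  have h := hI _ hp _ hq
  have h2 := Relation.ReflTransGen.lift
    (p := fun a b : P => b ∈ Φ.shiftSet I t ∧ (a ≤ b ∨ b ≤ a)) (fun x : P => Φ.Ω (-t) x)
    (fun a b hab => ⟨show Φ.Ω t (Φ.Ω (-t) b) ∈ I by rw [Φ.omega_omega_neg]; exact hab.1,
      hab.2.imp (fun h' => Φ.mono (-t) h') (fun h' => Φ.mono (-t) h')⟩) _ _ h
  simpa only [Function.onFun, Φ.omega_neg_omega] using h2

lemma RFlow.isInterval_shiftSet (Φ : RFlow P) {I : Set P} (hI : IsInterval I) (t : ℝ) :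
    IsInterval (Φ.shiftSet I t) :=
  ⟨Φ.posetConvex_shiftSet hI.1 t, Φ.posetConnected_shiftSet hI.2 t⟩

lemma RFlow.shiftSet_nonempty (Φ : RFlow P) {I : Set P} (hI : I.Nonempty) (t : ℝ) :
    (Φ.shiftSet I t).Nonempty := by
  obtain ⟨x, hx⟩ := hI
  exact ⟨Φ.Ω (-t) x, show Φ.Ω t (Φ.Ω (-t) x) ∈ I by rw [Φ.omega_omega_neg]; exact hx⟩

/-! ## Characteristic (interval) persistence modules -/

variable (K : Type) [Field K]

/-- The pointwise value of the characteristic module of `I`, as a submodule of `K`. -/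
noncomputable def charSub (I : Set P) (p : P) : Submodule K K :=
  if p ∈ I then ⊤ else ⊥

lemma charSub_eq_top {I : Set P} {p : P} (hp : p ∈ I) : charSub K I p = ⊤ := if_pos hp

lemma charSub_eq_bot {I : Set P} {p : P} (hp : p ∉ I) : charSub K I p = ⊥ := if_neg hp

lemma charElt_eq_zero {I : Set P} {p : P} (hp : p ∉ I) (x : ↥(charSub K I p)) : x = 0 := by
  exact Subtype.ext ((Submodule.eq_bot_iff _).mp (charSub_eq_bot K hp) (x : K) x.2)

/-- The structure maps of the characteristic module of `I`. -/
noncomputable def charMap (I : Set P) (p q : P) :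
    ↥(charSub K I p) →ₗ[K] ↥(charSub K I q) :=
  if h : p ∈ I ∧ q ∈ I then
    { toFun := fun x => ⟨(x : K), by rw [charSub_eq_top K h.2]; exact Submodule.mem_top⟩
      map_add' := fun x y => rfl
      map_smul' := fun c x => rfl }
  else 0

lemma charMap_id (I : Set P) (p : P) : charMap K I p p = LinearMap.id := by
  by_cases hp : p ∈ I
  · simp only [charMap, dif_pos (And.intro hp hp)]
    rfl
  · ext x
    rw [charElt_eq_zero K hp x]
    simp

lemma charMap_comp {I : Set P} (hI : PosetConvex I) {p q r : P} (hpq : p ≤ q) (hqr : q ≤ r) :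
    (charMap K I q r).comp (charMap K I p q) = charMap K I p r := by
  by_cases hp : p ∈ I
  · by_cases hr : r ∈ I
    · have hq : q ∈ I := hI hp hr hpq hqr
      ext x
      simp only [charMap, dif_pos (And.intro hp hq), dif_pos (And.intro hq hr),
        dif_pos (And.intro hp hr), LinearMap.comp_apply, LinearMap.coe_mk, AddHom.coe_mk]
    · ext x
      exact congrArg Subtype.val
        ((charElt_eq_zero K hr ((charMap K I q r).comp (charMap K I p q) x)).trans
          (charElt_eq_zero K hr (charMap K I p r x)).symm)
  · ext x
    rw [charElt_eq_zero K hp x]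
    simp

/-- The characteristic persistence module `C(I)` of a poset-convex subset `I`. -/
noncomputable def charMod (I : Set P) (hI : PosetConvex I) : P ⥤ ModuleCat K where
  obj p := ModuleCat.of K ↥(charSub K I p)
  map {p q} h := ModuleCat.ofHom (charMap K I p q)
  map_id p := ModuleCat.hom_ext (charMap_id K I p)
  map_comp {p q r} h1 h2 := ModuleCat.hom_ext (charMap_comp K hI (leOfHom h1) (leOfHom h2)).symm

/-- The zero persistence module, realized as the characteristic module of the empty interval. -/
noncomputable def zeroPMod : P ⥤ ModuleCat K :=
  charMod K (∅ : Set P) (fun _ _ _ hp _ _ _ => absurd hp (Set.notMem_empty _))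

/-! ## Barcodes and interval-decomposable modules -/

/-- A barcode over a poset: a multiset of nonempty intervals, encoded as an indexed family. -/
structure Barcode (P : Type) [PartialOrder P] where
  ι : Type
  B : ι → Set P
  interval : ∀ a : ι, IsInterval (B a)
  nonempty : ∀ a : ι, (B a).Nonempty

/-- The interval-decomposable module `⊕_{a} C(B a)` associated to a barcode. -/
noncomputable def bcMod (D : Barcode P) : P ⥤ ModuleCat K where
  obj p := ModuleCat.of K (Π₀ a : D.ι, ↥(charSub K (D.B a) p))
  map {p q} h := ModuleCat.ofHom (DFinsupp.mapRange.linearMap (fun a => charMap K (D.B a) p q))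
  map_id p := by
    have h : (fun a : D.ι => charMap K (D.B a) p p)
        = fun a : D.ι => (LinearMap.id : ↥(charSub K (D.B a) p) →ₗ[K] ↥(charSub K (D.B a) p)) := by
      funext a; exact charMap_id K (D.B a) p
    show ModuleCat.ofHom (DFinsupp.mapRange.linearMap (fun a => charMap K (D.B a) p p)) = ModuleCat.ofHom LinearMap.id
    rw [h, DFinsupp.mapRange.linearMap_id]
  map_comp {p q r} h1 h2 := by
    have h : (fun a : D.ι => charMap K (D.B a) p r)
        = fun a : D.ι => (charMap K (D.B a) q r).comp (charMap K (D.B a) p q) := by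
      funext a
      exact (charMap_comp K (D.interval a).1 (leOfHom h1) (leOfHom h2)).symm
    show ModuleCat.ofHom (DFinsupp.mapRange.linearMap (fun a => charMap K (D.B a) p r)) = _
    rw [h, DFinsupp.mapRange.linearMap_comp]
    rfl

/-- `M` is interval-decomposable with barcode `D`. -/
def IsDecompositionOf (D : Barcode P) (M : P ⥤ ModuleCat K) : Prop :=
  Nonempty (M ≅ bcMod K D)

/-- The shift of a barcode along a flow. -/
noncomputable def Barcode.shift (D : Barcode P) (Φ : RFlow P) (t : ℝ) : Barcode P where
  ι := D.ι
  B a := Φ.shiftSet (D.B a) t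
  interval a := Φ.isInterval_shiftSet (D.interval a) t
  nonempty a := Φ.shiftSet_nonempty (D.nonempty a) t

/-! ## Shifts of modules, interleavings, distances -/

/-- The shift `M(t)` of a persistence module along a flow. -/
noncomputable def Pshift (Φ : RFlow P) (t : ℝ) (M : P ⥤ ModuleCat K) : P ⥤ ModuleCat K :=
  (Φ.mono t).functor ⋙ M

/-- The ordered pair `(M, N)` is left `ε`-interleaved. -/
noncomputable def LeftInterleaved (Φ : RFlow P) {ε : ℝ} (hε : 0 ≤ ε)
    (M N : P ⥤ ModuleCat K) : Prop :=
  ∃ (f : M ⟶ Pshift K Φ ε N) (g : N ⟶ Pshift K Φ ε M),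
    ∀ p : P, f.app p ≫ g.app (Φ.Ω ε p) = M.map (homOfLE (Φ.self_le_twice hε p))

/-- `M` and `N` are `ε`-interleaved. -/
noncomputable def Interleaved (Φ : RFlow P) {ε : ℝ} (hε : 0 ≤ ε)
    (M N : P ⥤ ModuleCat K) : Prop :=
  ∃ (f : M ⟶ Pshift K Φ ε N) (g : N ⟶ Pshift K Φ ε M),
    (∀ p : P, f.app p ≫ g.app (Φ.Ω ε p) = M.map (homOfLE (Φ.self_le_twice hε p))) ∧
    (∀ p : P, g.app p ≫ f.app (Φ.Ω ε p) = N.map (homOfLE (Φ.self_le_twice hε p)))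

/-- The interleaving distance between two persistence modules. -/
noncomputable def dI (Φ : RFlow P) (M N : P ⥤ ModuleCat K) : ℝ≥0∞ :=
  ⨅ (ε : NNReal) (_ : Interleaved K Φ ε.coe_nonneg M N), (ε : ℝ≥0∞)

/-- An interval `I` is `t`-trivial if the transition morphism `C(I) → C(I(t))` vanishes. -/
noncomputable def IsTrivialIv (Φ : RFlow P) {t : ℝ} (ht : 0 ≤ t)
    (I : Set P) (hI : PosetConvex I) : Prop :=
  ∀ p : P, (charMod K I hI).map (homOfLE (Φ.self_le ht p)) = 0

/-- An `ε`-correspondence between two barcodes. -/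
noncomputable def IsCorrespondence (Φ : RFlow P) {ε : ℝ} (hε : 0 ≤ ε)
    (DM DN : Barcode P) (σ : Set (DM.ι × DN.ι)) : Prop :=
  (∀ ab ∈ σ, Interleaved K Φ hε
      (charMod K (DM.B ab.1) (DM.interval ab.1).1) (charMod K (DN.B ab.2) (DN.interval ab.2).1)) ∧
  (∀ a : DM.ι, (∀ b : DN.ι, (a, b) ∉ σ) →
      Interleaved K Φ hε (charMod K (DM.B a) (DM.interval a).1) (zeroPMod K)) ∧
  (∀ b : DN.ι, (∀ a : DM.ι, (a, b) ∉ σ) →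
      Interleaved K Φ hε (zeroPMod K) (charMod K (DN.B b) (DN.interval b).1))

/-- An `ε`-matching between two barcodes. -/
noncomputable def IsMatching (Φ : RFlow P) {ε : ℝ} (hε : 0 ≤ ε)
    (DM DN : Barcode P) (σ : Set (DM.ι × DN.ι)) : Prop :=
  IsCorrespondence K Φ hε DM DN σ ∧
  (∀ a b b', (a, b) ∈ σ → (a, b') ∈ σ → b = b') ∧
  (∀ a a' b, (a, b) ∈ σ → (a', b) ∈ σ → a = a')

/-- The Hausdorff distance between (modules with) barcodes `DM`, `DN`. -/
noncomputable def dH (Φ : RFlow P) (DM DN : Barcode P) : ℝ≥0∞ :=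
  ⨅ (ε : NNReal) (_ : ∃ σ : Set (DM.ι × DN.ι), IsCorrespondence K Φ ε.coe_nonneg DM DN σ),
    (ε : ℝ≥0∞)

/-- The bottleneck distance between (modules with) barcodes `DM`, `DN`. -/
noncomputable def dB (Φ : RFlow P) (DM DN : Barcode P) : ℝ≥0∞ :=
  ⨅ (ε : NNReal) (_ : ∃ σ : Set (DM.ι × DN.ι), IsMatching K Φ ε.coe_nonneg DM DN σ),
    (ε : ℝ≥0∞)


/-! ## Auxiliary lemmas -/

noncomputable def charOne {I : Set P} {p : P} (hp : p ∈ I) : ↥(charSub K I p) :=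
  ⟨1, by rw [charSub_eq_top K hp]; exact Submodule.mem_top⟩

lemma charOne_ne_zero {I : Set P} {p : P} (hp : p ∈ I) : charOne K hp ≠ 0 := by
  intro h
  have : (1 : K) = 0 := congrArg Subtype.val h
  exact one_ne_zero this

lemma charMap_apply_one {I : Set P} {p q : P} (hp : p ∈ I) (hq : q ∈ I) :
    charMap K I p q (charOne K hp) = charOne K hq := by
  simp only [charMap, dif_pos (And.intro hp hq)]
  rfl

lemma charMap_val {I : Set P} {p q : P} (hp : p ∈ I) (hq : q ∈ I) (x : ↥(charSub K I p)) :
    (charMap K I p q x : K) = (x : K) := by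
  simp only [charMap, dif_pos (And.intro hp hq)]
  rfl

lemma charMap_ne_zero {I : Set P} {p q : P} (hp : p ∈ I) (hq : q ∈ I) :
    charMap K I p q ≠ 0 := by
  intro h
  have h1 : charMap K I p q (charOne K hp) = 0 := by rw [h]; rfl
  rw [charMap_apply_one K hp hq] at h1
  exact charOne_ne_zero K hq h1

lemma charMap_eq_zero_of_left {I : Set P} {p q : P} (hp : p ∉ I) :
    charMap K I p q = 0 := by
  apply LinearMap.ext; intro x
  rw [charElt_eq_zero K hp x, map_zero]; rfl

lemma charMap_eq_zero_of_right {I : Set P} {p q : P} (hq : q ∉ I) :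
    charMap K I p q = 0 := by
  apply LinearMap.ext; intro x
  exact charElt_eq_zero K hq _

lemma mem_of_charMap_ne_zero {I : Set P} {p q : P} (h : charMap K I p q ≠ 0) :
    p ∈ I ∧ q ∈ I := by
  constructor
  · by_contra hp; exact h (charMap_eq_zero_of_left K hp)
  · by_contra hq; exact h (charMap_eq_zero_of_right K hq)

lemma RFlow.shiftSet_eq_image (Φ : RFlow P) (S : Set P) (t : ℝ) :
    Φ.shiftSet S t = Φ.Ω (-t) '' S := by
  ext p
  constructor
  · intro hp; exact ⟨Φ.Ω t p, hp, Φ.omega_neg_omega t p⟩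
  · rintro ⟨q, hq, rfl⟩
    show Φ.Ω t (Φ.Ω (-t) q) ∈ S
    rw [Φ.omega_omega_neg]; exact hq

/-- The canonical pointwise map between characteristic modules. -/
noncomputable def canonApp (A B : Set P) (p : P) :
    ↥(charSub K A p) →ₗ[K] ↥(charSub K B p) :=
  if h : p ∈ A ∩ B then
    { toFun := fun x => ⟨(x : K), by rw [charSub_eq_top K h.2]; exact Submodule.mem_top⟩
      map_add' := fun x y => rfl
      map_smul' := fun c x => rfl }
  else 0

lemma canonApp_apply {A B : Set P} {p : P} (h : p ∈ A ∩ B) (x : ↥(charSub K A p)) :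
    (canonApp K A B p x : K) = (x : K) := by
  simp only [canonApp, dif_pos h]
  rfl

/-- The canonical morphism between characteristic modules of valid intersection. -/
noncomputable def canonHom (A B : Set P) (hA : PosetConvex A) (hB : PosetConvex B)
    (hv : IsValid A B (A ∩ B)) : charMod K A hA ⟶ charMod K B hB where
  app p := ModuleCat.ofHom (canonApp K A B p)
  naturality {p q} h := by
    have hpq : p ≤ q := leOfHom h
    apply ModuleCat.hom_ext
    apply LinearMap.ext; intro (x : ↥(charSub K A p))
    show canonApp K A B q (charMap K A p q x) = charMap K B p q (canonApp K A B p x)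
    by_cases hpA : p ∈ A
    · by_cases hqB : q ∈ B
      · by_cases hqA : q ∈ A
        · by_cases hpB : p ∈ B
          · apply Subtype.ext
            rw [canonApp_apply K ⟨hqA, hqB⟩, charMap_val K hpA hqA,
              charMap_val K hpB hqB, canonApp_apply K ⟨hpA, hpB⟩]
          · exact absurd ((hv p ⟨hpA, by
              by_contra h'
              exact hpB ((hv q ⟨hqA, hqB⟩).1 p hpA hpq)⟩).1 p hpA le_rfl) hpB
        · -- q ∉ A : then p ∉ B (else validity gives q ∈ A)
          have hpB : p ∉ A ∩ B := fun hp => hqA ((hv p hp).2 q hqB hpq)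
          rw [charMap_eq_zero_of_right K hqA]
          simp only [LinearMap.zero_apply, map_zero]
          rw [show canonApp K A B p = 0 from dif_neg hpB]
          simp
      · apply Subtype.ext
        exact (congrArg Subtype.val (charElt_eq_zero K hqB _)).trans
          (congrArg Subtype.val (charElt_eq_zero K hqB _)).symm
    · rw [charElt_eq_zero K hpA x]
      simp
/-- Components of a morphism of characteristic modules, retyped. -/
noncomputable def appC {A B : Set P} {hA : PosetConvex A} {hB : PosetConvex B}
    (f : charMod K A hA ⟶ charMod K B hB) (p : P) :
    ↥(charSub K A p) →ₗ[K] ↥(charSub K B p) := (f.app p).hom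

/-- The value of a morphism of characteristic modules at the canonical generator. -/
noncomputable def appVal {A B : Set P} {hA : PosetConvex A} {hB : PosetConvex B}
    (f : charMod K A hA ⟶ charMod K B hB) (p : P) (hp : p ∈ A) : K :=
  (appC K f p (charOne K hp) : K)

lemma hom_step {A B : Set P} {hA : PosetConvex A} {hB : PosetConvex B}
    (f : charMod K A hA ⟶ charMod K B hB) {p q : P} (hpq : p ≤ q)
    (hpA : p ∈ A) (hqA : q ∈ A) :
    appC K f q (charOne K hqA) = charMap K B p q (appC K f p (charOne K hpA)) := by
  have hnat := f.naturality (homOfLE hpq)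
  have h1 : appC K f q (charMap K A p q (charOne K hpA))
      = charMap K B p q (appC K f p (charOne K hpA)) := by
    have := congrArg (fun φ : (charMod K A hA).obj p ⟶ (charMod K B hB).obj q => φ.hom (charOne K hpA)) hnat
    exact this
  rwa [charMap_apply_one K hpA hqA] at h1

lemma hom_val_step {A B : Set P} {hA : PosetConvex A} {hB : PosetConvex B}
    (f : charMod K A hA ⟶ charMod K B hB) {p q : P} (hpq : p ≤ q)
    (hpA : p ∈ A) (hqA : q ∈ A) (hpB : p ∈ B) (hqB : q ∈ B) :
    appVal K f q hqA = appVal K f p hpA := by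
  unfold appVal
  rw [hom_step K f hpq hpA hqA, charMap_val K hpB hqB]

lemma valid_of_hom_ne_zero {A B : Set P} {hA : PosetConvex A} {hB : PosetConvex B}
    (hconn : PosetConnected (A ∩ B))
    (f : charMod K A hA ⟶ charMod K B hB) (hf : f ≠ 0) :
    IsValid A B (A ∩ B) := by
  have hex : ∃ p, appC K f p ≠ 0 := by
    by_contra h
    push_neg at h
    exact hf (by
      apply NatTrans.ext
      funext p
      exact ModuleCat.hom_ext (h p))
  obtain ⟨p₀, hp₀⟩ := hex
  have hp₀A : p₀ ∈ A := by
    by_contra h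
    exact hp₀ (by
      apply LinearMap.ext; intro x
      rw [charElt_eq_zero K h x, map_zero]; rfl)
  have hp₀B : p₀ ∈ B := by
    by_contra h
    exact hp₀ (by
      apply LinearMap.ext; intro x
      exact charElt_eq_zero K h _)
  have hc0 : appVal K f p₀ hp₀A ≠ 0 := by
    intro h0
    apply hp₀
    apply LinearMap.ext; intro x
    have hx : x = (x : K) • charOne K hp₀A := by
      apply Subtype.ext
      simp [charOne]
    rw [hx, map_smul]
    have hz : appC K f p₀ (charOne K hp₀A) = 0 := Subtype.ext h0
    rw [hz, smul_zero]; rfl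
  set c : K := appVal K f p₀ hp₀A with hc
  have key : ∀ q, Relation.ReflTransGen (fun a b => b ∈ A ∩ B ∧ (a ≤ b ∨ b ≤ a)) p₀ q →
      ∀ hq : q ∈ A ∩ B, appVal K f q hq.1 = c := by
    intro q hpath
    induction hpath with
    | refl => intro hq; rfl
    | @tail b q hb hstep ih =>
      intro hq
      have hbmem : b ∈ A ∩ B := by
        rcases hb.cases_tail with h | ⟨m, _, hm⟩
        · rw [h]; exact ⟨hp₀A, hp₀B⟩
        · exact hm.1
      have vb := ih hbmem
      rcases hstep.2 with hle | hle
      · rw [hom_val_step K f hle hbmem.1 hq.1 hbmem.2 hq.2]; exact vb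
      · rw [← hom_val_step K f hle hq.1 hbmem.1 hq.2 hbmem.2]; exact vb
  have const : ∀ q, ∀ hq : q ∈ A ∩ B, appVal K f q hq.1 = c := by
    intro q hq
    exact key q (hconn p₀ ⟨hp₀A, hp₀B⟩ q hq) hq
  intro p hp
  constructor
  · intro q hqA hqp
    by_contra hqB
    have h1 := hom_step K f hqp hqA hp.1
    have h2 : appC K f q (charOne K hqA) = 0 := charElt_eq_zero K hqB _
    rw [h2, map_zero] at h1
    have h3 := const p hp
    apply hc0
    rw [← h3]
    unfold appVal
    rw [h1]
    rfl
  · intro r hrB hpr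
    by_contra hrA
    have hnat := f.naturality (homOfLE hpr)
    have h1 : appC K f r (charMap K A p r (charOne K hp.1))
        = charMap K B p r (appC K f p (charOne K hp.1)) := by
      have := congrArg
        (fun φ : (charMod K A hA).obj p ⟶ (charMod K B hB).obj r => φ.hom (charOne K hp.1)) hnat
      exact this
    rw [charMap_eq_zero_of_right K hrA] at h1
    have h2 : ((charMap K B p r (appC K f p (charOne K hp.1)) : ↥(charSub K B r)) : K) = c := by
      rw [charMap_val K hp.2 hrB]
      exact const p hp
    rw [← h1] at h2
    simp only [LinearMap.zero_apply, map_zero] at h2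
    apply hc0
    rw [← h2]
    rfl
lemma comp_through_char_eq_zero {V W : Type} [AddCommGroup V] [Module K V]
    [AddCommGroup W] [Module K W] {B : Set P} {q : P} (hq : q ∉ B)
    (φ : V →ₗ[K] ↥(charSub K B q)) (ψ : ↥(charSub K B q) →ₗ[K] W) :
    ψ.comp φ = 0 := by
  apply LinearMap.ext
  intro x
  rw [LinearMap.comp_apply, charElt_eq_zero K hq (φ x), map_zero]
  rfl

example (A B : P ⥤ ModuleCat K) (p : P) : (0 : A ⟶ B).app p = 0 := rfl
example (A B C : ModuleCat K) (φ : A ⟶ B) (ψ : B ⟶ C) : (φ ≫ ψ).hom = ψ.hom.comp φ.hom := rfl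
/-- geometric characterization of `ε`-interleavings between interval
modules on `2ε`-significant intervals lying in an intersection-closed, flow-closed
family of intervals. -/
theorem interleaving_characterization (Φ : RFlow P)
    (F : Set (Set P)) (hFiv : ∀ S ∈ F, IsInterval S)
    (hFcap : ∀ S ∈ F, ∀ T ∈ F, S ∩ T ∈ F)
    (hFflow : ∀ S ∈ F, ∀ t : ℝ, Φ.Ω t '' S ∈ F)
    {ε : ℝ} (hε : 0 ≤ ε) (I J : Set P) (hIF : I ∈ F) (hJF : J ∈ F)
    (hIsig : ¬ IsTrivialIv K Φ (show (0:ℝ) ≤ 2 * ε by linarith) I (hFiv I hIF).1)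
    (hJsig : ¬ IsTrivialIv K Φ (show (0:ℝ) ≤ 2 * ε by linarith) J (hFiv J hJF).1) :
    Interleaved K Φ hε (charMod K I (hFiv I hIF).1) (charMod K J (hFiv J hJF).1) ↔
      ((∃ f : charMod K I (hFiv I hIF).1 ⟶
           charMod K (Φ.shiftSet J ε) (Φ.posetConvex_shiftSet (hFiv J hJF).1 ε), f ≠ 0) ∧
       (∃ g : charMod K J (hFiv J hJF).1 ⟶
           charMod K (Φ.shiftSet I ε) (Φ.posetConvex_shiftSet (hFiv I hIF).1 ε), g ≠ 0) ∧
       ((I ∩ Φ.shiftSet I (2 * ε)).Nonempty ∧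
         I ∩ Φ.shiftSet I (2 * ε) ⊆ Φ.shiftSet J ε) ∧
       ((J ∩ Φ.shiftSet J (2 * ε)).Nonempty ∧
         J ∩ Φ.shiftSet J (2 * ε) ⊆ Φ.shiftSet I ε)) := by
  have hI : PosetConvex I := (hFiv I hIF).1
  have hJ : PosetConvex J := (hFiv J hJF).1
  have heq2 : ∀ p : P, Φ.Ω (2 * ε) p = Φ.Ω ε (Φ.Ω ε p) := fun p => by
    rw [two_mul, Φ.add]
  constructor
  · rintro ⟨f, g, hfg, hgf⟩
    -- witnesses from significance
    have hIsig' : ∃ p, charMap K I p (Φ.Ω (2 * ε) p) ≠ 0 := by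
      simp only [IsTrivialIv, not_forall] at hIsig
      obtain ⟨p, hp⟩ := hIsig
      exact ⟨p, fun h => hp (ModuleCat.hom_ext h)⟩
    have hJsig' : ∃ p, charMap K J p (Φ.Ω (2 * ε) p) ≠ 0 := by
      simp only [IsTrivialIv, not_forall] at hJsig
      obtain ⟨p, hp⟩ := hJsig
      exact ⟨p, fun h => hp (ModuleCat.hom_ext h)⟩
    obtain ⟨p₁, hp₁⟩ := hIsig'
    obtain ⟨q₁, hq₁⟩ := hJsig'
    have hp₁m := mem_of_charMap_ne_zero K hp₁
    have hq₁m := mem_of_charMap_ne_zero K hq₁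
    have hInon : (I ∩ Φ.shiftSet I (2 * ε)).Nonempty := ⟨p₁, hp₁m.1, hp₁m.2⟩
    have hJnon : (J ∩ Φ.shiftSet J (2 * ε)).Nonempty := ⟨q₁, hq₁m.1, hq₁m.2⟩
    -- subset conditions
    have hsubI : I ∩ Φ.shiftSet I (2 * ε) ⊆ Φ.shiftSet J ε := by
      intro p hp
      have hI2 : Φ.Ω ε (Φ.Ω ε p) ∈ I := by rw [← heq2]; exact hp.2
      by_contra hpJ
      have hcomp : (f.app p ≫ g.app (Φ.Ω ε p)).hom = charMap K I p (Φ.Ω ε (Φ.Ω ε p)) := congrArg ModuleCat.Hom.hom (hfg p)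
      apply charMap_ne_zero K hp.1 hI2
      rw [← hcomp]
      exact comp_through_char_eq_zero K hpJ (f.app p).hom (g.app (Φ.Ω ε p)).hom
    have hsubJ : J ∩ Φ.shiftSet J (2 * ε) ⊆ Φ.shiftSet I ε := by
      intro p hp
      have hJ2 : Φ.Ω ε (Φ.Ω ε p) ∈ J := by rw [← heq2]; exact hp.2
      by_contra hpI
      have hcomp : (g.app p ≫ f.app (Φ.Ω ε p)).hom = charMap K J p (Φ.Ω ε (Φ.Ω ε p)) := congrArg ModuleCat.Hom.hom (hgf p)
      apply charMap_ne_zero K hp.1 hJ2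
      rw [← hcomp]
      exact comp_through_char_eq_zero K hpI (g.app p).hom (f.app (Φ.Ω ε p)).hom
    refine ⟨⟨f, ?_⟩, ⟨g, ?_⟩, ⟨hInon, hsubI⟩, ⟨hJnon, hsubJ⟩⟩
    · intro hf0
      have hI2 : Φ.Ω ε (Φ.Ω ε p₁) ∈ I := by rw [← heq2]; exact hp₁m.2
      apply charMap_ne_zero K hp₁m.1 hI2
      have hcomp : (f.app p₁ ≫ g.app (Φ.Ω ε p₁)).hom = charMap K I p₁ (Φ.Ω ε (Φ.Ω ε p₁)) := congrArg ModuleCat.Hom.hom (hfg p₁)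
      rw [← hcomp, hf0]
      exact LinearMap.comp_zero (g.app (Φ.Ω ε p₁)).hom
    · intro hg0
      have hJ2 : Φ.Ω ε (Φ.Ω ε q₁) ∈ J := by rw [← heq2]; exact hq₁m.2
      apply charMap_ne_zero K hq₁m.1 hJ2
      have hcomp : (g.app q₁ ≫ f.app (Φ.Ω ε q₁)).hom = charMap K J q₁ (Φ.Ω ε (Φ.Ω ε q₁)) := congrArg ModuleCat.Hom.hom (hgf q₁)
      rw [← hcomp, hg0]
      exact LinearMap.comp_zero (f.app (Φ.Ω ε q₁)).hom
  · rintro ⟨⟨f₀, hf₀⟩, ⟨g₀, hg₀⟩, ⟨hInon, hIJ⟩, ⟨hJnon, hJI⟩⟩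
    have hJsF : Φ.shiftSet J ε ∈ F := by
      rw [Φ.shiftSet_eq_image]; exact hFflow J hJF (-ε)
    have hIsF : Φ.shiftSet I ε ∈ F := by
      rw [Φ.shiftSet_eq_image]; exact hFflow I hIF (-ε)
    have hconnIJ : PosetConnected (I ∩ Φ.shiftSet J ε) :=
      (hFiv _ (hFcap I hIF _ hJsF)).2
    have hconnJI : PosetConnected (J ∩ Φ.shiftSet I ε) :=
      (hFiv _ (hFcap J hJF _ hIsF)).2
    have hvIJ : IsValid I (Φ.shiftSet J ε) (I ∩ Φ.shiftSet J ε) :=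
      valid_of_hom_ne_zero K hconnIJ f₀ hf₀
    have hvJI : IsValid J (Φ.shiftSet I ε) (J ∩ Φ.shiftSet I ε) :=
      valid_of_hom_ne_zero K hconnJI g₀ hg₀
    refine ⟨canonHom K I (Φ.shiftSet J ε) hI (Φ.posetConvex_shiftSet hJ ε) hvIJ,
      canonHom K J (Φ.shiftSet I ε) hJ (Φ.posetConvex_shiftSet hI ε) hvJI, ?_, ?_⟩
    · intro p
      apply ModuleCat.hom_ext
      apply LinearMap.ext
      intro (x : ↥(charSub K I p))
      show canonApp K J (Φ.shiftSet I ε) (Φ.Ω ε p) (canonApp K I (Φ.shiftSet J ε) p x)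
          = charMap K I p (Φ.Ω ε (Φ.Ω ε p)) x
      by_cases h2 : Φ.Ω ε (Φ.Ω ε p) ∈ I
      · by_cases hpI : p ∈ I
        · have hpJ : Φ.Ω ε p ∈ J := hIJ ⟨hpI, show Φ.Ω (2 * ε) p ∈ I from by
            rw [heq2]; exact h2⟩
          apply Subtype.ext
          exact (canonApp_apply K (show Φ.Ω ε p ∈ J ∩ Φ.shiftSet I ε from ⟨hpJ, h2⟩) _).trans
            ((canonApp_apply K (show p ∈ I ∩ Φ.shiftSet J ε from ⟨hpI, hpJ⟩) x).trans
            (charMap_val K hpI h2 x).symm)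
        · rw [charElt_eq_zero K hpI x]
          exact (congrArg (canonApp K J (Φ.shiftSet I ε) (Φ.Ω ε p))
            (map_zero (canonApp K I (Φ.shiftSet J ε) p))).trans
            ((map_zero _).trans (map_zero (charMap K I p (Φ.Ω ε (Φ.Ω ε p)))).symm)
      · apply Subtype.ext
        exact (congrArg Subtype.val (charElt_eq_zero K h2
            (canonApp K J (Φ.shiftSet I ε) (Φ.Ω ε p) (canonApp K I (Φ.shiftSet J ε) p x)))).trans
          (congrArg Subtype.val (charElt_eq_zero K h2
            (charMap K I p (Φ.Ω ε (Φ.Ω ε p)) x))).symm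
    · intro p
      apply ModuleCat.hom_ext
      apply LinearMap.ext
      intro (x : ↥(charSub K J p))
      show canonApp K I (Φ.shiftSet J ε) (Φ.Ω ε p) (canonApp K J (Φ.shiftSet I ε) p x)
          = charMap K J p (Φ.Ω ε (Φ.Ω ε p)) x
      by_cases h2 : Φ.Ω ε (Φ.Ω ε p) ∈ J
      · by_cases hpJ : p ∈ J
        · have hpI : Φ.Ω ε p ∈ I := hJI ⟨hpJ, show Φ.Ω (2 * ε) p ∈ J from by
            rw [heq2]; exact h2⟩
          apply Subtype.ext
          exact (canonApp_apply K (show Φ.Ω ε p ∈ I ∩ Φ.shiftSet J ε from ⟨hpI, h2⟩) _).trans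
            ((canonApp_apply K (show p ∈ J ∩ Φ.shiftSet I ε from ⟨hpJ, hpI⟩) x).trans
            (charMap_val K hpJ h2 x).symm)
        · rw [charElt_eq_zero K hpJ x]
          exact (congrArg (canonApp K I (Φ.shiftSet J ε) (Φ.Ω ε p))
            (map_zero (canonApp K J (Φ.shiftSet I ε) p))).trans
            ((map_zero _).trans (map_zero (charMap K J p (Φ.Ω ε (Φ.Ω ε p)))).symm)
      · apply Subtype.ext
        exact (congrArg Subtype.val (charElt_eq_zero K h2
            (canonApp K I (Φ.shiftSet J ε) (Φ.Ω ε p) (canonApp K J (Φ.shiftSet I ε) p x)))).trans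
          (congrArg Subtype.val (charElt_eq_zero K h2
            (charMap K J p (Φ.Ω ε (Φ.Ω ε p)) x))).symm
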